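/- For n masses on the unit circle at angles θ_1,…,θ_n, U_{-2}(m,θ) := ∑_{j<k} m_j m_k r_{jk}² = ∑_{j<k} m_j m_k (2 - 2cos(θ_j - θ_k)), and ∇_m U_{-2} = 2M·𝟙 together with ∇_θ U_{-2} = 0 hold if and only if ∑_j m_j cos θ_j = ∑_j m_j sin θ_j = 0, where M = ∑_j m_j. -/

import Mathlib

open Real Finset

/-- `U_{-2}(m, θ) = ∑_{j<k} m_j m_k (2 - 2 cos (θ_j - θ_k))`. -/
noncomputable def Uneg2 (n : ℕ) (m θ : Fin n → ℝ) : ℝ :=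
  ∑ p ∈ Finset.univ.filter (fun p : Fin n × Fin n => p.1 < p.2),
    m p.1 * m p.2 * (2 - 2 * Real.cos (θ p.1 - θ p.2))

lemma pair_sum_eq {n : ℕ} (k : Fin n) (F : Fin n → ℝ) (hF : F k = 0) :
    ∑ p ∈ Finset.univ.filter (fun p : Fin n × Fin n => p.1 < p.2),
      ((if p.1 = k then F p.2 else 0) + (if p.2 = k then F p.1 else 0)) = ∑ j, F j := by
  rw [Finset.sum_add_distrib]
  have hA : ∑ p ∈ Finset.univ.filter (fun p : Fin n × Fin n => p.1 < p.2),
      (if p.1 = k then F p.2 else 0) = ∑ b, if k < b then F b else 0 := by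
    rw [Finset.sum_filter, Fintype.sum_prod_type]
    rw [Finset.sum_eq_single k]
    · simp
    · intro a _ ha
      apply Finset.sum_eq_zero
      intro b _
      simp [ha]
    · simp
  have hB : ∑ p ∈ Finset.univ.filter (fun p : Fin n × Fin n => p.1 < p.2),
      (if p.2 = k then F p.1 else 0) = ∑ a, if a < k then F a else 0 := by
    rw [Finset.sum_filter, Fintype.sum_prod_type, Finset.sum_comm]
    rw [Finset.sum_eq_single k]
    · apply Finset.sum_congr rfl
      intro a _
      simp
    · intro b _ hb
      apply Finset.sum_eq_zero
      intro a _
      simp [hb]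
    · simp
  rw [hA, hB, ← Finset.sum_add_distrib]
  apply Finset.sum_congr rfl
  intro j _
  rcases lt_trichotomy j k with h | h | h
  · rw [if_neg (asymm h), if_pos h, zero_add]
  · subst h; simp [hF]
  · rw [if_pos h, if_neg (asymm h), add_zero]

lemma deriv_mass {n : ℕ} (m θ : Fin n → ℝ) (k : Fin n) :
    deriv (fun t => Uneg2 n (Function.update m k t) θ) (m k)
      = 2 * (∑ j, m j) - 2 * Real.cos (θ k) * (∑ j, m j * Real.cos (θ j))
        - 2 * Real.sin (θ k) * (∑ j, m j * Real.sin (θ j)) := by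
  have H : HasDerivAt (fun t => Uneg2 n (Function.update m k t) θ)
      (∑ p ∈ Finset.univ.filter (fun p : Fin n × Fin n => p.1 < p.2),
        ((if p.1 = k then m p.2 * (2 - 2 * Real.cos (θ p.2 - θ k)) else 0)
          + (if p.2 = k then m p.1 * (2 - 2 * Real.cos (θ p.1 - θ k)) else 0))) (m k) := by
    unfold Uneg2
    apply HasDerivAt.fun_sum
    intro p hp
    simp only [Finset.mem_filter, Finset.mem_univ, true_and] at hp
    obtain ⟨a, b⟩ := p
    simp only at hp ⊢
    have hne : a ≠ b := ne_of_lt hp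
    by_cases h1 : a = k
    · subst h1
      have h2 : b ≠ a := hne.symm
      rw [if_pos rfl, if_neg h2]
      have hcos : Real.cos (θ a - θ b) = Real.cos (θ b - θ a) := by
        rw [show θ a - θ b = -(θ b - θ a) by ring, Real.cos_neg]
      simp only [hcos, Function.update_self, Function.update_of_ne h2]
      have h3 := ((hasDerivAt_id' (m a)).mul_const (m b)).mul_const
        (2 - 2 * Real.cos (θ b - θ a))
      convert h3 using 1
      · rfl
      ring
    · by_cases h2 : b = k
      · subst h2
        rw [if_neg h1, if_pos rfl]
        simp only [Function.update_self, Function.update_of_ne h1]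
        have h3 := (((hasDerivAt_id' (m b)).const_mul (m a)).mul_const
          (2 - 2 * Real.cos (θ a - θ b)))
        convert h3 using 1
        · rfl
        ring
      · rw [if_neg h1, if_neg h2]
        simp only [Function.update_of_ne h1, Function.update_of_ne h2]
        simpa using hasDerivAt_const (m k)
          (m a * m b * (2 - 2 * Real.cos (θ a - θ b)))
  rw [H.deriv, pair_sum_eq k (fun j => m j * (2 - 2 * Real.cos (θ j - θ k))) (by simp)]
  rw [Finset.mul_sum, Finset.mul_sum, Finset.mul_sum, ← Finset.sum_sub_distrib,
    ← Finset.sum_sub_distrib]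
  exact Finset.sum_congr rfl fun j _ => by rw [Real.cos_sub]; ring

lemma deriv_theta {n : ℕ} (m θ : Fin n → ℝ) (k : Fin n) :
    deriv (fun t => Uneg2 n m (Function.update θ k t)) (θ k)
      = 2 * m k * Real.sin (θ k) * (∑ j, m j * Real.cos (θ j))
        - 2 * m k * Real.cos (θ k) * (∑ j, m j * Real.sin (θ j)) := by
  have H : HasDerivAt (fun t => Uneg2 n m (Function.update θ k t))
      (∑ p ∈ Finset.univ.filter (fun p : Fin n × Fin n => p.1 < p.2),
        ((if p.1 = k then 2 * m k * m p.2 * Real.sin (θ k - θ p.2) else 0)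
          + (if p.2 = k then 2 * m k * m p.1 * Real.sin (θ k - θ p.1) else 0))) (θ k) := by
    unfold Uneg2
    apply HasDerivAt.fun_sum
    intro p hp
    simp only [Finset.mem_filter, Finset.mem_univ, true_and] at hp
    obtain ⟨a, b⟩ := p
    simp only at hp ⊢
    have hne : a ≠ b := ne_of_lt hp
    by_cases h1 : a = k
    · subst h1
      have h2 : b ≠ a := hne.symm
      rw [if_pos rfl, if_neg h2]
      simp only [Function.update_self, Function.update_of_ne h2]
      have hc : HasDerivAt (fun t => Real.cos (t - θ b))
          (-Real.sin (θ a - θ b) * 1) (θ a) :=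
        ((hasDerivAt_id' (θ a)).sub_const (θ b)).cos
      have h3 := ((hc.const_mul 2).const_sub 2).const_mul (m a * m b)
      convert h3 using 1
      · rfl
      ring
    · by_cases h2 : b = k
      · subst h2
        rw [if_neg h1, if_pos rfl]
        simp only [Function.update_self, Function.update_of_ne h1]
        have hc : HasDerivAt (fun t => Real.cos (θ a - t))
            (-Real.sin (θ a - θ b) * (-1)) (θ b) :=
          ((hasDerivAt_id' (θ b)).const_sub (θ a)).cos
        have hsin : Real.sin (θ a - θ b) = -Real.sin (θ b - θ a) := by
          rw [show θ a - θ b = -(θ b - θ a) by ring, Real.sin_neg]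
        rw [hsin] at hc
        have h3 := ((hc.const_mul 2).const_sub 2).const_mul (m a * m b)
        convert h3 using 1
        · rfl
        ring
      · rw [if_neg h1, if_neg h2]
        simp only [Function.update_of_ne h1, Function.update_of_ne h2]
        simpa using hasDerivAt_const (θ k)
          (m a * m b * (2 - 2 * Real.cos (θ a - θ b)))
  rw [H.deriv, pair_sum_eq k (fun j => 2 * m k * m j * Real.sin (θ k - θ j)) (by simp)]
  rw [Finset.mul_sum, Finset.mul_sum, ← Finset.sum_sub_distrib]
  exact Finset.sum_congr rfl fun j _ => by rw [Real.sin_sub]; ring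

theorem stmt_8 {n : ℕ} (hn : 0 < n) (m θ : Fin n → ℝ) (hm : ∀ k, 0 < m k) :
    ((∀ k, deriv (fun t => Uneg2 n (Function.update m k t) θ) (m k)
        = 2 * ∑ j, m j) ∧
     (∀ k, deriv (fun t => Uneg2 n m (Function.update θ k t)) (θ k) = 0))
    ↔ ((∑ j, m j * Real.cos (θ j)) = 0 ∧ (∑ j, m j * Real.sin (θ j)) = 0) := by
  constructor
  · rintro ⟨h1, h2⟩
    set k0 : Fin n := ⟨0, hn⟩
    have e1 := h1 k0
    rw [deriv_mass] at e1
    have e2 := h2 k0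
    rw [deriv_theta] at e2
    have pyth := Real.sin_sq_add_cos_sq (θ k0)
    have e1' : Real.cos (θ k0) * (∑ j, m j * Real.cos (θ j))
        + Real.sin (θ k0) * (∑ j, m j * Real.sin (θ j)) = 0 := by linarith
    have e2' : Real.sin (θ k0) * (∑ j, m j * Real.cos (θ j))
        - Real.cos (θ k0) * (∑ j, m j * Real.sin (θ j)) = 0 := by
      have hz : m k0 * (2 * (Real.sin (θ k0) * (∑ j, m j * Real.cos (θ j))
          - Real.cos (θ k0) * (∑ j, m j * Real.sin (θ j)))) = 0 := by linarith
      rcases mul_eq_zero.mp hz with h | h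
      · exact absurd h (hm k0).ne'
      · linarith
    constructor
    · linear_combination Real.cos (θ k0) * e1' + Real.sin (θ k0) * e2'
        - (∑ j, m j * Real.cos (θ j)) * pyth
    · linear_combination Real.sin (θ k0) * e1' - Real.cos (θ k0) * e2'
        - (∑ j, m j * Real.sin (θ j)) * pyth
  · rintro ⟨hc, hs⟩
    constructor
    · intro k
      rw [deriv_mass, hc, hs]
      ring
    · intro k
      rw [deriv_theta, hc, hs]
      ring
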